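/- Let l ∈ (0,1) be a real number satisfying ((3+l)/4)^5 = l, and set σᵢ = ((3+l)/4)^{4−i} for i = 0, 1, 2, 3. Define A = (l + 1 − 2σ₀)/(σ₀ − l) and qᵢ = (1 − σᵢ)/(σᵢ − l) for i = 1, 2, 3, and S = 1 + A·(1 + q₁ + q₁·q₂ + q₁·q₂·q₃). Then S ≥ 25; in particular 1/S ≤ 0.04. -/
import Mathlib

set_option maxHeartbeats 1000000


/-- For the uniform-distribution optimal signal ratio `(3+l)/4` with fixed point
`((3+l)/4)^5 = l`, the quantity `S = S(4,l)` built from the candidate signals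
`σᵢ = ((3+l)/4)^{4−i}` satisfies `S ≥ 25`, hence `1/S ≤ 0.04`. -/
theorem uniform_worst_case_mass_bound (l : ℝ) (hl0 : 0 < l) (hl1 : l < 1)
    (hfix : ((3 + l) / 4) ^ 5 = l)
    (σ₀ σ₁ σ₂ σ₃ A q₁ q₂ q₃ S : ℝ)
    (hσ₀ : σ₀ = ((3 + l) / 4) ^ 4) (hσ₁ : σ₁ = ((3 + l) / 4) ^ 3)
    (hσ₂ : σ₂ = ((3 + l) / 4) ^ 2) (hσ₃ : σ₃ = ((3 + l) / 4) ^ 1)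
    (hA : A = (l + 1 - 2 * σ₀) / (σ₀ - l))
    (hq₁ : q₁ = (1 - σ₁) / (σ₁ - l)) (hq₂ : q₂ = (1 - σ₂) / (σ₂ - l))
    (hq₃ : q₃ = (1 - σ₃) / (σ₃ - l))
    (hS : S = 1 + A * (1 + q₁ + q₁ * q₂ + q₁ * q₂ * q₃)) :
    25 ≤ S ∧ 1 / S ≤ 0.04 := by
  set r : ℝ := (3 + l) / 4 with hr
  have hl : l = 4 * r - 3 := by rw [hr]; ring
  have hr1 : r < 1 := by linarith
  have hrlo : (3:ℝ)/4 < r := by linarith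
  have hr0 : (0:ℝ) ≤ r := by linarith
  have h0 : (r - 1) * (r^4 + r^3 + r^2 + r - 3) = 0 := by
    linear_combination hfix + hl
  have hp : r^4 + r^3 + r^2 + r - 3 = 0 := by
    rcases mul_eq_zero.mp h0 with h | h
    · linarith
    · exact h
  have ha : (0.88817 : ℝ) ≤ r := by
    by_contra hcon
    push_neg at hcon
    have h2 := pow_le_pow_left₀ hr0 hcon.le 2
    have h3 := pow_le_pow_left₀ hr0 hcon.le 3
    have h4 := pow_le_pow_left₀ hr0 hcon.le 4
    norm_num at h2 h3 h4
    linarith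
  have hb : r ≤ (0.88818 : ℝ) := by
    by_contra hcon
    push_neg at hcon
    have h2 := pow_le_pow_left₀ (by norm_num : (0:ℝ) ≤ 0.88818) hcon.le 2
    have h3 := pow_le_pow_left₀ (by norm_num : (0:ℝ) ≤ 0.88818) hcon.le 3
    have h4 := pow_le_pow_left₀ (by norm_num : (0:ℝ) ≤ 0.88818) hcon.le 4
    norm_num at h2 h3 h4
    linarith
  have ha2 := pow_le_pow_left₀ (by norm_num : (0:ℝ) ≤ 0.88817) ha 2
  have ha3 := pow_le_pow_left₀ (by norm_num : (0:ℝ) ≤ 0.88817) ha 3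
  have ha4 := pow_le_pow_left₀ (by norm_num : (0:ℝ) ≤ 0.88817) ha 4
  have hb2 := pow_le_pow_left₀ hr0 hb 2
  have hb3 := pow_le_pow_left₀ hr0 hb 3
  have hb4 := pow_le_pow_left₀ hr0 hb 4
  norm_num at ha2 ha3 ha4 hb2 hb3 hb4
  -- denominators
  have hD0 : (0:ℝ) < r^4 - (4*r - 3) := by linarith
  have hD1 : (0:ℝ) < r^3 - (4*r - 3) := by linarith
  have hD2 : (0:ℝ) < r^2 - (4*r - 3) := by linarith
  have hA' : (4.4246 : ℝ) ≤ A := by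
    rw [hA, hσ₀, hl, le_div_iff₀ hD0]
    linarith
  have hq1' : (2.0229 : ℝ) ≤ q₁ := by
    rw [hq₁, hσ₁, hl, le_div_iff₀ hD1]
    linarith
  have hq2' : (0.8939 : ℝ) ≤ q₂ := by
    rw [hq₂, hσ₂, hl, le_div_iff₀ hD2]
    linarith
  have hq3' : q₃ = 1/3 := by
    rw [hq₃, hσ₃, hl, pow_one]
    rw [show r - (4*r - 3) = 3 * (1 - r) by ring]
    rw [div_eq_div_iff (by linarith) (by norm_num)]
    ring
  have hq12 : (1.808 : ℝ) ≤ q₁ * q₂ := by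
    have h := mul_le_mul hq1' hq2' (by norm_num) (by linarith : (0:ℝ) ≤ q₁)
    norm_num at h
    linarith
  have hP : (5.433 : ℝ) ≤ 1 + q₁ + q₁ * q₂ + q₁ * q₂ * (1/3) := by linarith
  have hAP : (4.4246 : ℝ) * 5.433 ≤ A * (1 + q₁ + q₁ * q₂ + q₁ * q₂ * (1/3)) :=
    mul_le_mul hA' hP (by norm_num) (by linarith)
  have h25 : (25:ℝ) ≤ S := by
    rw [hS, hq3']
    norm_num at hAP
    linarith
  refine ⟨h25, ?_⟩
  rw [div_le_iff₀ (by linarith : (0:ℝ) < S)]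
  linarith
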